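/- Let d ≥ 2, ω = exp(2πi/d), Z the generalized Pauli-Z on ℂ^d, |J⟩ the uniform superposition, X the cyclic shift X|i⟩ = |i+1 mod d⟩, and |Φ_d⟩ = (1/√d)∑_{i=0}^{d−1}|i⟩|i⟩. With A₀ = ω^{−1/4}Z(I − (1−i)|J⟩⟨J|), A₁ = ω^{1/4}Z(I − (1+i)|J⟩⟨J|), B₀ = Z, B₁ = ω^{1/2}(I − 2|J⟩⟨J|)Z, and the SATWAP Bell operator O_d = ∑_{k=1}^{d−1}(r_k A₀^k ⊗ B₀^{−k} + conj(r_k)ω^k A₀^k ⊗ B₁^{−k} + conj(r_k) A₁^k ⊗ B₀^{−k} + r_k A₁^k ⊗ B₁^{−k}), one has ⟨Φ_d| O_d |Φ_d⟩ = 2(d−1). -/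

import Mathlib

open Complex Matrix Kronecker Finset

private lemma satwap_omega_ne_zero {d : ℕ} (ω : ℂ)
    (hω : ω = Complex.exp (2 * Real.pi * I / d)) : ω ≠ 0 := by
  rw [hω]; exact Complex.exp_ne_zero _

private lemma satwap_omega_zpow {d : ℕ} (ω : ℂ)
    (hω : ω = Complex.exp (2 * Real.pi * I / d)) (m : ℤ) :
    ω ^ m = Complex.exp (m * (2 * Real.pi * I / d)) := by
  rw [hω, Complex.exp_int_mul]

private lemma satwap_omega_zpow_eq_one_iff {d : ℕ} (hd : 2 ≤ d) (ω : ℂ)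
    (hω : ω = Complex.exp (2 * Real.pi * I / d)) (m : ℤ) :
    ω ^ m = 1 ↔ (d : ℤ) ∣ m := by
  have hd0 : (d : ℂ) ≠ 0 := by
    simpa using Nat.cast_ne_zero (R := ℂ) |>.mpr (by omega)
  rw [satwap_omega_zpow ω hω, Complex.exp_eq_one_iff]
  constructor
  · rintro ⟨n, hn⟩
    refine ⟨n, ?_⟩
    have h2 : (2 : ℂ) * Real.pi * I ≠ 0 := by
      simp [Real.pi_ne_zero, Complex.I_ne_zero]
    have hmc : (m : ℂ) * (2 * Real.pi * I) = ((d : ℤ) * n : ℤ) * (2 * Real.pi * I) := by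
      field_simp at hn
      push_cast
      linear_combination (2 * (Real.pi : ℂ) * I) * hn
    have := mul_right_cancel₀ h2 hmc
    exact_mod_cast this
  · rintro ⟨n, rfl⟩
    refine ⟨n, ?_⟩
    field_simp
    ring
    norm_cast

private lemma satwap_Esum {d : ℕ} (hd : 2 ≤ d) (ω : ℂ)
    (hω : ω = Complex.exp (2 * Real.pi * I / d)) (m : ℤ) :
    ∑ x : Fin d, ω ^ ((x : ℤ) * m) = if (d : ℤ) ∣ m then (d : ℂ) else 0 := by
  have hω0 := satwap_omega_ne_zero ω hω
  by_cases h : (d : ℤ) ∣ m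
  · simp only [if_pos h]
    have h1 : ∀ x : Fin d, ω ^ ((x : ℤ) * m) = 1 := by
      intro x
      rw [satwap_omega_zpow_eq_one_iff hd ω hω]
      exact Dvd.dvd.mul_left h _
    simp [h1]
  · simp only [if_neg h]
    have hu1 : ω ^ m ≠ 1 := fun hc => h ((satwap_omega_zpow_eq_one_iff hd ω hω m).mp hc)
    have hud : (ω ^ m) ^ d = 1 := by
      rw [← zpow_natCast (ω ^ m) d, ← _root_.zpow_mul, mul_comm, _root_.zpow_mul,
        (satwap_omega_zpow_eq_one_iff hd ω hω d).mpr dvd_rfl, _root_.one_zpow]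
    calc ∑ x : Fin d, ω ^ ((x : ℤ) * m)
        = ∑ x ∈ range d, (ω ^ m) ^ x := by
          rw [← Fin.sum_univ_eq_sum_range (fun x => (ω ^ m) ^ x) d]
          refine Finset.sum_congr rfl fun x _ => ?_
          rw [mul_comm, _root_.zpow_mul, zpow_natCast]
      _ = 0 := by rw [geom_sum_eq hu1, hud]; simp

private lemma satwap_Mentry {d : ℕ} (ω : ℂ) (Jproj : Matrix (Fin d) (Fin d) ℂ)
    (hJp : ∀ j l, Jproj j l = 1 / d) (γ : ℂ) (j l : Fin d) :
    ((Matrix.diagonal fun i : Fin d => ω ^ (i : ℕ)) * (1 - γ • Jproj)) j l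
      = ω ^ (j : ℕ) * ((if j = l then 1 else 0) + -γ / d) := by
  have : ∀ x : Fin d, (1 - γ • Jproj) x l = (if x = l then 1 else 0) + -γ / d := by
    intro x
    simp [Matrix.sub_apply, Matrix.one_apply, Matrix.smul_apply, hJp, smul_eq_mul]
    ring
  rw [Matrix.mul_apply]
  calc ∑ x, Matrix.diagonal (fun i : Fin d => ω ^ (i : ℕ)) j x * (1 - γ • Jproj) x l
      = ∑ x : Fin d, (if j = x then ω ^ (j : ℕ) * ((if x = l then 1 else 0) + -γ / d) else 0) := by
        refine Finset.sum_congr rfl fun x _ => ?_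
        rw [Matrix.diagonal_apply, this x]
        split_ifs with h <;> simp [h]
    _ = ω ^ (j : ℕ) * ((if j = l then 1 else 0) + -γ / d) := by
        rw [Finset.sum_ite_eq]
        simp

private lemma satwap_Mpow_entry {d : ℕ} (hd : 2 ≤ d) (ω : ℂ)
    (hω : ω = Complex.exp (2 * Real.pi * I / d))
    (Jproj : Matrix (Fin d) (Fin d) ℂ) (hJp : ∀ j l, Jproj j l = 1 / d) (γ : ℂ) :
    ∀ k, 1 ≤ k → k ≤ d - 1 → ∀ j l : Fin d,
    (((Matrix.diagonal fun i : Fin d => ω ^ (i : ℕ)) * (1 - γ • Jproj)) ^ k) j l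
      = ω ^ ((j : ℤ) * k) * ((if j = l then 1 else 0)
          + -γ / d * ∑ t ∈ Finset.range k, ω ^ (((l : ℤ) - (j : ℤ)) * t)) := by
  have hω0 : ω ≠ 0 := satwap_omega_ne_zero ω hω
  set M := (Matrix.diagonal fun i : Fin d => ω ^ (i : ℕ)) * (1 - γ • Jproj) with hM
  have hMe : ∀ a b : Fin d, M a b = ω ^ (a : ℕ) * ((if a = b then 1 else 0) + -γ / d) := by
    intro a b; rw [hM]; exact satwap_Mentry ω Jproj hJp γ a b
  refine Nat.le_induction ?_ ?_
  · intro _ j l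
    rw [pow_one, hMe j l]
    have h1 : ω ^ ((j : ℤ) * (1 : ℕ)) = ω ^ (j : ℕ) := by
      rw [Nat.cast_one, mul_one, zpow_natCast]
    rw [h1]
    simp
  · intro k hk1 IH hk2 j l
    have hkd : k ≤ d - 1 := by omega
    have IHk := IH hkd
    rw [pow_succ', Matrix.mul_apply]
    set c : ℂ := -γ with hc
    set σ : Fin d → Fin d → ℂ :=
      fun a b => ∑ t ∈ Finset.range k, ω ^ (((b : ℤ) - (a : ℤ)) * t) with hσ
    have hsummand : ∀ x : Fin d,
        M j x * (M ^ k) x l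
          = (if j = x then ω ^ ((j : ℤ)) * (ω ^ ((x : ℤ) * k) * ((if x = l then 1 else 0) + c / d * σ x l)) else 0)
            + (c / d * ω ^ ((j : ℤ))) * (ω ^ ((x : ℤ) * k) * (if x = l then 1 else 0))
            + (c / d * (c / d) * ω ^ ((j : ℤ))) * (ω ^ ((x : ℤ) * k) * σ x l) := by
      intro x
      rw [hMe j x, IHk x l]
      simp only [hσ]
      rw [show ω ^ (j : ℕ) = ω ^ ((j : ℤ)) by rw [zpow_natCast]]
      split_ifs with h1 <;> ring
    rw [Finset.sum_congr rfl fun x _ => hsummand x]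
    rw [Finset.sum_add_distrib, Finset.sum_add_distrib, Finset.sum_ite_eq]
    rw [← Finset.mul_sum, ← Finset.mul_sum]
    have hS2 : ∑ x : Fin d, ω ^ ((x : ℤ) * k) * (if x = l then 1 else 0) = ω ^ ((l : ℤ) * k) := by
      rw [Finset.sum_congr rfl (g := fun x : Fin d => if x = l then ω ^ ((x : ℤ) * k) else 0)
        (fun x _ => by split_ifs with h <;> simp [h]), Finset.sum_ite_eq']
      simp
    have hS3 : ∑ x : Fin d, ω ^ ((x : ℤ) * k) * σ x l = 0 := by
      simp only [hσ, Finset.mul_sum]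
      rw [Finset.sum_comm]
      refine Finset.sum_eq_zero fun t ht => ?_
      have ht' : t < k := Finset.mem_range.mp ht
      have hstep : ∀ x : Fin d, ω ^ ((x : ℤ) * k) * ω ^ (((l : ℤ) - (x : ℤ)) * t)
          = ω ^ ((l : ℤ) * t) * ω ^ ((x : ℤ) * ((k : ℤ) - t)) := by
        intro x
        rw [← zpow_add₀ hω0, ← zpow_add₀ hω0]
        congr 1; ring
      rw [Finset.sum_congr rfl fun x _ => hstep x, ← Finset.mul_sum,
        satwap_Esum hd ω hω ((k : ℤ) - t)]
      have hnd : ¬ ((d : ℤ) ∣ ((k : ℤ) - t)) := by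
        intro hdvd
        have h1 : (0 : ℤ) < (k : ℤ) - t := by omega
        have h2 := Int.le_of_dvd h1 hdvd
        omega
      rw [if_neg hnd]
      ring
    rw [hS2, hS3]
    simp only [Finset.mem_univ, if_true]
    have h1 : ω ^ ((j : ℤ)) * ω ^ ((j : ℤ) * k) = ω ^ ((j : ℤ) * ((k : ℕ) + 1 : ℕ)) := by
      rw [← zpow_add₀ hω0]; congr 1; push_cast; ring
    have h2 : ω ^ ((j : ℤ)) * ω ^ ((l : ℤ) * k)
        = ω ^ ((j : ℤ) * ((k : ℕ) + 1 : ℕ)) * ω ^ (((l : ℤ) - (j : ℤ)) * k) := by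
      rw [← zpow_add₀ hω0, ← zpow_add₀ hω0]; congr 1; push_cast; ring
    rw [Finset.sum_range_succ]
    linear_combination ((if j = l then (1:ℂ) else 0) + c / d * σ j l) * h1 + (c / d) * h2




set_option maxHeartbeats 1000000 in
/-- The ideal SATWAP strategy: with `A₀ = ω^{−1/4}Z(I−(1−i)|J⟩⟨J|)`,
`A₁ = ω^{1/4}Z(I−(1+i)|J⟩⟨J|)`, `B₀ = Z`, `B₁ = ω^{1/2}(I−2|J⟩⟨J|)Z` and the
maximally entangled state `|Φ_d⟩`, one has `⟨Φ_d|O_d|Φ_d⟩ = 2(d−1)`.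
Negative powers `X^{−k}` are written `(star X)^k` (all four observables are unitary). -/
theorem satwap_optimal_value (d : ℕ) (hd : 2 ≤ d)
    (ω : ℂ) (hω : ω = Complex.exp (2 * Real.pi * I / d))
    (r : ℕ → ℂ)
    (hr : ∀ k, r k = (1 / Real.sqrt 2) *
      Complex.exp (2 * Real.pi * I * (2 * (k : ℂ) - d) / (8 * d)))
    (Z : Matrix (Fin d) (Fin d) ℂ)
    (hZ : Z = Matrix.diagonal fun i : Fin d => ω ^ (i : ℕ))
    (J : Fin d → ℂ) (hJ : J = fun _ => (1 : ℂ) / Real.sqrt d)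
    (Jproj : Matrix (Fin d) (Fin d) ℂ)
    (hJproj : Jproj = Matrix.vecMulVec J fun i => (starRingEnd ℂ) (J i))
    (A₀ A₁ B₀ B₁ : Matrix (Fin d) (Fin d) ℂ)
    (hA₀ : A₀ = Complex.exp (-(Real.pi * I) / (2 * d)) • (Z * (1 - (1 - I) • Jproj)))
    (hA₁ : A₁ = Complex.exp (Real.pi * I / (2 * d)) • (Z * (1 - (1 + I) • Jproj)))
    (hB₀ : B₀ = Z)
    (hB₁ : B₁ = Complex.exp (Real.pi * I / d) • ((1 - (2 : ℂ) • Jproj) * Z))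
    (Od : Matrix (Fin d × Fin d) (Fin d × Fin d) ℂ)
    (hOd : Od = ∑ k ∈ Finset.Icc 1 (d - 1),
      (r k • ((A₀ ^ k) ⊗ₖ ((star B₀) ^ k)) +
       ((starRingEnd ℂ) (r k) * ω ^ k) • ((A₀ ^ k) ⊗ₖ ((star B₁) ^ k)) +
       (starRingEnd ℂ) (r k) • ((A₁ ^ k) ⊗ₖ ((star B₀) ^ k)) +
       r k • ((A₁ ^ k) ⊗ₖ ((star B₁) ^ k))))
    (Φ : Fin d × Fin d → ℂ)
    (hΦ : Φ = fun p => if p.1 = p.2 then (1 : ℂ) / Real.sqrt d else 0) :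
    ∑ p, (starRingEnd ℂ) (Φ p) * Od.mulVec Φ p = 2 * ((d : ℂ) - 1) := by
  classical
  -- basic scalars
  have hd0 : (d : ℂ) ≠ 0 := Nat.cast_ne_zero.mpr (by omega)
  have hω0 : ω ≠ 0 := satwap_omega_ne_zero ω hω
  set μ : ℂ := Complex.exp (Real.pi * I / (2 * d)) with hμ
  have hμ0 : μ ≠ 0 := Complex.exp_ne_zero _
  have hω4 : ω = μ ^ 4 := by
    rw [hω, hμ, ← Complex.exp_nat_mul]
    congr 1
    field_simp
    ring
  have hνinv : Complex.exp (-(Real.pi * I) / (2 * d)) = μ⁻¹ := by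
    rw [show (-(Real.pi * I)) / (2 * (d:ℂ)) = -(Real.pi * I / (2 * d)) by ring,
      Complex.exp_neg]
  have hφ : Complex.exp (Real.pi * I / d) = μ ^ 2 := by
    rw [hμ, ← Complex.exp_nat_mul]
    congr 1
    field_simp
    ring
  have hconjμ : (starRingEnd ℂ) μ = μ⁻¹ := by
    rw [hμ, ← Complex.exp_conj, ← Complex.exp_neg]
    congr 1
    simp only [map_div₀, _root_.map_mul, Complex.conj_ofReal, Complex.conj_I,
      Complex.conj_natCast, _root_.map_ofNat]
    ring
  have hconjω : ∀ m : ℤ, (starRingEnd ℂ) (ω ^ m) = ω ^ (-m) := by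
    intro m
    rw [map_zpow₀, hω4, map_pow, hconjμ, inv_pow, _root_.inv_zpow, _root_.zpow_neg]
  have hsd : ((Real.sqrt d : ℝ) : ℂ) * ((Real.sqrt d : ℝ) : ℂ) = (d : ℂ) := by
    norm_cast
    exact Real.mul_self_sqrt (Nat.cast_nonneg d)
  have hJp : ∀ j l : Fin d, Jproj j l = 1 / d := by
    intro j l
    rw [hJproj, hJ, Matrix.vecMulVec_apply]
    simp only [map_div₀, _root_.map_one, Complex.conj_ofReal]
    rw [div_mul_div_comm, one_mul, hsd]
  have hr' : ∀ k : ℕ, r k = (1 - I) / 2 * μ ^ k := by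
    intro k
    rw [hr k]
    have hs2 : ((Real.sqrt 2 : ℝ) : ℂ) * ((Real.sqrt 2 : ℝ) : ℂ) = 2 := by
      norm_cast
      exact Real.mul_self_sqrt (by norm_num)
    have hs20 : ((Real.sqrt 2 : ℝ) : ℂ) ≠ 0 := by
      intro h
      rw [h, mul_zero] at hs2
      norm_num at hs2
    have harg : 2 * (Real.pi:ℂ) * I * (2 * (k : ℂ) - d) / (8 * d)
        = (k : ℂ) * (Real.pi * I / (2 * d)) + (↑(-(Real.pi / 4)) * I) := by
      push_cast
      field_simp
      ring
    rw [harg, Complex.exp_add, Complex.exp_mul_I, hμ, ← Complex.exp_nat_mul]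
    rw [show ((k:ℂ) * (Real.pi * I / (2*d))) = (Real.pi * I / (2*d)) * k by ring]
    rw [← Complex.ofReal_cos, ← Complex.ofReal_sin,
      Real.cos_neg, Real.sin_neg, Real.cos_pi_div_four, Real.sin_pi_div_four]
    push_cast
    field_simp
    ring
  have hrconj : ∀ k : ℕ, (starRingEnd ℂ) (r k) = (1 + I) / 2 * μ⁻¹ ^ k := by
    intro k
    rw [hr' k, _root_.map_mul, map_pow, hconjμ, map_div₀, map_sub, _root_.map_one,
      Complex.conj_I, _root_.map_ofNat, sub_neg_eq_add]
  -- entry formulas for the powers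
  have hA0k : ∀ k, 1 ≤ k → k ≤ d - 1 → ∀ j l : Fin d, (A₀ ^ k) j l
      = μ⁻¹ ^ k * (ω ^ ((j:ℤ) * k) * ((if j = l then 1 else 0)
          + -(1 - I) / d * ∑ t ∈ Finset.range k, ω ^ (((l:ℤ) - (j:ℤ)) * t))) := by
    intro k hk1 hk2 j l
    rw [hA₀, hνinv, hZ, smul_pow, Matrix.smul_apply,
      satwap_Mpow_entry hd ω hω Jproj hJp (1 - I) k hk1 hk2 j l, smul_eq_mul]
  have hA1k : ∀ k, 1 ≤ k → k ≤ d - 1 → ∀ j l : Fin d, (A₁ ^ k) j l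
      = μ ^ k * (ω ^ ((j:ℤ) * k) * ((if j = l then 1 else 0)
          + -(1 + I) / d * ∑ t ∈ Finset.range k, ω ^ (((l:ℤ) - (j:ℤ)) * t))) := by
    intro k hk1 hk2 j l
    rw [hA₁, hZ, smul_pow, Matrix.smul_apply,
      satwap_Mpow_entry hd ω hω Jproj hJp (1 + I) k hk1 hk2 j l, smul_eq_mul, hμ]
  have hB0k : ∀ (k : ℕ) (j l : Fin d), ((star B₀) ^ k) j l
      = (if j = l then (1:ℂ) else 0) * ω ^ (-((j:ℤ) * k)) := by
    intro k j l
    rw [hB₀, hZ, Matrix.star_eq_conjTranspose, Matrix.diagonal_conjTranspose,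
      Matrix.diagonal_pow, Matrix.diagonal_apply]
    split_ifs with h
    · rw [one_mul, Pi.pow_apply, Pi.star_apply]
      have h1 : star (ω ^ (j : ℕ)) = ω ^ (-(j:ℤ)) := by
        rw [show star (ω ^ (j:ℕ)) = (starRingEnd ℂ) (ω ^ ((j:ℕ):ℤ)) by rw [zpow_natCast]; rfl,
          hconjω]
      rw [h1, ← zpow_natCast (ω ^ (-(j:ℤ))) k, ← _root_.zpow_mul]
      congr 1
      ring
    · rw [zero_mul]
  have hB1k : ∀ k, 1 ≤ k → k ≤ d - 1 → ∀ j l : Fin d, ((star B₁) ^ k) j l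
      = (μ⁻¹ ^ k) ^ 2 * (ω ^ (-((j:ℤ) * k)) * ((if j = l then 1 else 0)
          + -2 / d * ∑ t ∈ Finset.range k, ω ^ (((j:ℤ) - (l:ℤ)) * t))) := by
    intro k hk1 hk2 j l
    have hJt : Jprojᵀ = Jproj := Matrix.ext fun a b => by
      rw [Matrix.transpose_apply, hJp, hJp]
    have hNT : (1 - (2:ℂ) • Jproj) * Z = (Z * (1 - (2:ℂ) • Jproj))ᵀ := by
      rw [Matrix.transpose_mul, Matrix.transpose_sub, Matrix.transpose_smul, hJt,
        Matrix.transpose_one, hZ, Matrix.diagonal_transpose]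
    have hB1p : B₁ ^ k = (μ ^ 2) ^ k • ((Z * (1 - (2:ℂ) • Jproj)) ^ k)ᵀ := by
      rw [hB₁, hφ, hNT, smul_pow, Matrix.transpose_pow]
    rw [show (star B₁) ^ k = star (B₁ ^ k) from (star_pow B₁ k).symm, hB1p,
      Matrix.star_apply, Matrix.smul_apply, Matrix.transpose_apply, smul_eq_mul, hZ,
      satwap_Mpow_entry hd ω hω Jproj hJp (2:ℂ) k hk1 hk2 j l]
    rw [show ∀ x : ℂ, star x = (starRingEnd ℂ) x from fun x => rfl]
    simp only [_root_.map_mul, map_add, map_pow, map_div₀, map_neg, _root_.map_ofNat,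
      map_natCast, map_sum, hconjμ, hconjω, apply_ite (starRingEnd ℂ), _root_.map_one,
      _root_.map_zero]
    have hterm : ∀ t : ℕ, ω ^ (-(((l:ℤ) - (j:ℤ)) * t)) = ω ^ (((j:ℤ) - (l:ℤ)) * t) := by
      intro t; congr 1; ring
    simp only [hterm]
    ring
  -- the per-round sums
  have key : ∀ k, 1 ≤ k → k ≤ d - 1 →
      (∑ j : Fin d, ∑ l : Fin d,
        (r k * ((A₀ ^ k) j l * ((star B₀) ^ k) j l)
        + ((starRingEnd ℂ) (r k) * ω ^ k) * ((A₀ ^ k) j l * ((star B₁) ^ k) j l)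
        + (starRingEnd ℂ) (r k) * ((A₁ ^ k) j l * ((star B₀) ^ k) j l)
        + r k * ((A₁ ^ k) j l * ((star B₁) ^ k) j l))) = 2 * d := by
    intro k hk1 hk2
    set σ : Fin d → Fin d → ℂ :=
      fun a b => ∑ t ∈ Finset.range k, ω ^ (((b:ℤ) - (a:ℤ)) * t) with hσ
    set D : Fin d → Fin d → ℂ := fun a b => if a = b then 1 else 0 with hD
    have hσd : ∀ j : Fin d, σ j j = (k : ℂ) := by
      intro j
      simp [hσ, sub_self]
    have hcan : ∀ j : Fin d, ω ^ ((j:ℤ) * k) * ω ^ (-((j:ℤ) * k)) = 1 := by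
      intro j
      rw [← zpow_add₀ hω0, add_neg_cancel, zpow_zero]
    -- core counting sums
    have hDD : ∑ j : Fin d, ∑ l : Fin d, D j l * D j l = (d : ℂ) := by
      simp [hD]
    have hDσ1 : ∑ j : Fin d, ∑ l : Fin d, D j l * σ j l = (d : ℂ) * k := by
      have h1 : ∀ j : Fin d, ∑ l : Fin d, D j l * σ j l = (k : ℂ) := by
        intro j
        rw [Finset.sum_congr rfl (g := fun l : Fin d => if j = l then σ j l else 0)
          (fun l _ => by simp only [hD]; split_ifs <;> simp), Finset.sum_ite_eq]
        simp [hσd j]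
      rw [Finset.sum_congr rfl fun j _ => h1 j]
      simp [mul_comm]
    have hDσ2 : ∑ j : Fin d, ∑ l : Fin d, D j l * σ l j = (d : ℂ) * k := by
      have h1 : ∀ j : Fin d, ∑ l : Fin d, D j l * σ l j = (k : ℂ) := by
        intro j
        rw [Finset.sum_congr rfl (g := fun l : Fin d => if j = l then σ l j else 0)
          (fun l _ => by simp only [hD]; split_ifs <;> simp), Finset.sum_ite_eq]
        simp [hσd j]
      rw [Finset.sum_congr rfl fun j _ => h1 j]
      simp [mul_comm]
    have hσσ : ∑ j : Fin d, ∑ l : Fin d, σ j l * σ l j = (k : ℂ) * (d:ℂ)^2 := by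
      have hpt : ∀ j l : Fin d, σ j l * σ l j
          = ∑ s ∈ Finset.range k, ∑ t ∈ Finset.range k, ω ^ (((l:ℤ) - (j:ℤ)) * ((s:ℤ) - t)) := by
        intro j l
        rw [hσ, Finset.sum_mul_sum]
        refine Finset.sum_congr rfl fun s _ => Finset.sum_congr rfl fun t _ => ?_
        rw [← zpow_add₀ hω0]
        congr 1
        ring
      have hfac : ∀ m : ℤ, (∑ j : Fin d, ∑ l : Fin d, ω ^ (((l:ℤ) - (j:ℤ)) * m))
          = if (d:ℤ) ∣ m then ((d:ℂ))^2 else 0 := by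
        intro m
        have h1 : ∀ j l : Fin d, ω ^ (((l:ℤ) - (j:ℤ)) * m)
            = ω ^ ((j:ℤ) * (-m)) * ω ^ ((l:ℤ) * m) := by
          intro j l
          rw [← zpow_add₀ hω0]
          congr 1
          ring
        calc ∑ j : Fin d, ∑ l : Fin d, ω ^ (((l:ℤ) - (j:ℤ)) * m)
            = ∑ j : Fin d, ω ^ ((j:ℤ) * (-m)) * (∑ l : Fin d, ω ^ ((l:ℤ) * m)) := by
              refine Finset.sum_congr rfl fun j _ => ?_
              rw [Finset.mul_sum]
              exact Finset.sum_congr rfl fun l _ => h1 j l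
          _ = (∑ j : Fin d, ω ^ ((j:ℤ) * (-m))) * (∑ l : Fin d, ω ^ ((l:ℤ) * m)) := by
              rw [Finset.sum_mul]
          _ = if (d:ℤ) ∣ m then ((d:ℂ))^2 else 0 := by
              rw [satwap_Esum hd ω hω, satwap_Esum hd ω hω]
              by_cases hdm : (d:ℤ) ∣ m
              · rw [if_pos hdm, if_pos ((dvd_neg).mpr hdm), if_pos hdm]
                ring
              · rw [if_neg hdm, if_neg (fun hc => hdm ((dvd_neg).mp hc)), if_neg hdm]
                ring
      calc ∑ j : Fin d, ∑ l : Fin d, σ j l * σ l j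
          = ∑ j : Fin d, ∑ s ∈ Finset.range k, ∑ l : Fin d, ∑ t ∈ Finset.range k,
              ω ^ (((l:ℤ) - (j:ℤ)) * ((s:ℤ) - t)) := by
            refine Finset.sum_congr rfl fun j _ => ?_
            rw [Finset.sum_comm]
            exact Finset.sum_congr rfl fun l _ => hpt j l
        _ = ∑ s ∈ Finset.range k, ∑ j : Fin d, ∑ l : Fin d, ∑ t ∈ Finset.range k,
              ω ^ (((l:ℤ) - (j:ℤ)) * ((s:ℤ) - t)) := Finset.sum_comm
        _ = ∑ s ∈ Finset.range k, ∑ t ∈ Finset.range k, ∑ j : Fin d, ∑ l : Fin d,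
              ω ^ (((l:ℤ) - (j:ℤ)) * ((s:ℤ) - t)) := by
            refine Finset.sum_congr rfl fun s _ => ?_
            refine Eq.trans (Finset.sum_congr rfl fun j _ => Finset.sum_comm) ?_
            exact Finset.sum_comm
        _ = ∑ s ∈ Finset.range k, ∑ t ∈ Finset.range k,
              (if s = t then ((d:ℂ))^2 else 0) := by
            refine Finset.sum_congr rfl fun s hs => Finset.sum_congr rfl fun t ht => ?_
            rw [hfac ((s:ℤ) - t)]
            have hs' := Finset.mem_range.mp hs
            have ht' := Finset.mem_range.mp ht
            congr 1
            simp only [eq_iff_iff]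
            constructor
            · intro hdvd
              have habs : |(s:ℤ) - t| < (d:ℤ) := by
                rw [abs_lt]
                omega
              have := Int.eq_zero_of_abs_lt_dvd hdvd habs
              omega
            · intro h
              subst h
              simp
        _ = (k : ℂ) * (d:ℂ)^2 := by
            have hrow : ∀ s ∈ Finset.range k,
                (∑ t ∈ Finset.range k, if s = t then ((d:ℂ))^2 else 0) = ((d:ℂ))^2 := by
              intro s hs
              rw [Finset.sum_ite_eq, if_pos hs]
            rw [Finset.sum_congr rfl hrow, Finset.sum_const, Finset.card_range]
            simp [nsmul_eq_mul, mul_comm]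
    -- the generic double sum
    have Hmain : ∀ a b : ℂ,
        (∑ j : Fin d, ∑ l : Fin d, (D j l + a * σ j l) * (D j l + b * σ l j))
          = (d:ℂ) + a * ((d:ℂ) * k) + b * ((d:ℂ) * k) + a * b * ((k:ℂ) * (d:ℂ)^2) := by
      intro a b
      have hexp : ∀ j l : Fin d, (D j l + a * σ j l) * (D j l + b * σ l j)
          = D j l * D j l + b * (D j l * σ l j) + a * (D j l * σ j l)
            + (a * b) * (σ j l * σ l j) := by
        intro j l
        ring
      calc (∑ j : Fin d, ∑ l : Fin d, (D j l + a * σ j l) * (D j l + b * σ l j))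
          = (∑ j : Fin d, ∑ l : Fin d, (D j l * D j l + b * (D j l * σ l j)
              + a * (D j l * σ j l) + (a * b) * (σ j l * σ l j))) := by
            exact Finset.sum_congr rfl fun j _ => Finset.sum_congr rfl fun l _ => hexp j l
        _ = (∑ j : Fin d, ∑ l : Fin d, D j l * D j l)
            + b * (∑ j : Fin d, ∑ l : Fin d, D j l * σ l j)
            + a * (∑ j : Fin d, ∑ l : Fin d, D j l * σ j l)
            + (a * b) * (∑ j : Fin d, ∑ l : Fin d, σ j l * σ l j) := by
            simp only [Finset.sum_add_distrib, ← Finset.mul_sum]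
        _ = (d:ℂ) + a * ((d:ℂ) * k) + b * ((d:ℂ) * k) + a * b * ((k:ℂ) * (d:ℂ)^2) := by
            rw [hDD, hDσ1, hDσ2, hσσ]
            ring
    -- four sums
    have T1 : ∑ j : Fin d, ∑ l : Fin d, (A₀ ^ k) j l * ((star B₀) ^ k) j l
        = μ⁻¹ ^ k * ((d:ℂ) + (I - 1) * k) := by
      have hpt : ∀ j l : Fin d, (A₀ ^ k) j l * ((star B₀) ^ k) j l
          = μ⁻¹ ^ k * ((D j l + (-(1 - I) / d) * σ j l) * (D j l + 0 * σ l j)) := by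
        intro j l
        rw [hA0k k hk1 hk2 j l, hB0k k j l]
        simp only [hD, hσ]
        linear_combination (μ⁻¹ ^ k * ((if j = l then (1:ℂ) else 0)
          + (-(1 - I) / d) * ∑ t ∈ Finset.range k, ω ^ (((l:ℤ) - (j:ℤ)) * t))
          * (if j = l then (1:ℂ) else 0)) * hcan j
      rw [Finset.sum_congr rfl fun j _ => Finset.sum_congr rfl fun l _ => hpt j l]
      simp only [← Finset.mul_sum]
      rw [Hmain]
      field_simp
      ring
    have T3 : ∑ j : Fin d, ∑ l : Fin d, (A₁ ^ k) j l * ((star B₀) ^ k) j l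
        = μ ^ k * ((d:ℂ) + (-1 - I) * k) := by
      have hpt : ∀ j l : Fin d, (A₁ ^ k) j l * ((star B₀) ^ k) j l
          = μ ^ k * ((D j l + (-(1 + I) / d) * σ j l) * (D j l + 0 * σ l j)) := by
        intro j l
        rw [hA1k k hk1 hk2 j l, hB0k k j l]
        simp only [hD, hσ]
        linear_combination (μ ^ k * ((if j = l then (1:ℂ) else 0)
          + (-(1 + I) / d) * ∑ t ∈ Finset.range k, ω ^ (((l:ℤ) - (j:ℤ)) * t))
          * (if j = l then (1:ℂ) else 0)) * hcan j
      rw [Finset.sum_congr rfl fun j _ => Finset.sum_congr rfl fun l _ => hpt j l]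
      simp only [← Finset.mul_sum]
      rw [Hmain]
      field_simp
      ring
    have T2 : ∑ j : Fin d, ∑ l : Fin d, (A₀ ^ k) j l * ((star B₁) ^ k) j l
        = μ⁻¹ ^ k * (μ⁻¹ ^ k) ^ 2 * ((d:ℂ) + (-1 - I) * k) := by
      have hpt : ∀ j l : Fin d, (A₀ ^ k) j l * ((star B₁) ^ k) j l
          = μ⁻¹ ^ k * (μ⁻¹ ^ k) ^ 2
            * ((D j l + (-(1 - I) / d) * σ j l) * (D j l + (-2 / d) * σ l j)) := by
        intro j l
        rw [hA0k k hk1 hk2 j l, hB1k k hk1 hk2 j l]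
        simp only [hD, hσ]
        linear_combination (μ⁻¹ ^ k * (μ⁻¹ ^ k) ^ 2
          * ((if j = l then (1:ℂ) else 0)
            + (-(1 - I) / d) * ∑ t ∈ Finset.range k, ω ^ (((l:ℤ) - (j:ℤ)) * t))
          * ((if j = l then (1:ℂ) else 0)
            + (-2 / d) * ∑ t ∈ Finset.range k, ω ^ (((j:ℤ) - (l:ℤ)) * t))) * hcan j
      rw [Finset.sum_congr rfl fun j _ => Finset.sum_congr rfl fun l _ => hpt j l]
      simp only [← Finset.mul_sum]
      rw [Hmain]
      field_simp
      ring
    have T4 : ∑ j : Fin d, ∑ l : Fin d, (A₁ ^ k) j l * ((star B₁) ^ k) j l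
        = μ ^ k * (μ⁻¹ ^ k) ^ 2 * ((d:ℂ) + (I - 1) * k) := by
      have hpt : ∀ j l : Fin d, (A₁ ^ k) j l * ((star B₁) ^ k) j l
          = μ ^ k * (μ⁻¹ ^ k) ^ 2
            * ((D j l + (-(1 + I) / d) * σ j l) * (D j l + (-2 / d) * σ l j)) := by
        intro j l
        rw [hA1k k hk1 hk2 j l, hB1k k hk1 hk2 j l]
        simp only [hD, hσ]
        linear_combination (μ ^ k * (μ⁻¹ ^ k) ^ 2
          * ((if j = l then (1:ℂ) else 0)
            + (-(1 + I) / d) * ∑ t ∈ Finset.range k, ω ^ (((l:ℤ) - (j:ℤ)) * t))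
          * ((if j = l then (1:ℂ) else 0)
            + (-2 / d) * ∑ t ∈ Finset.range k, ω ^ (((j:ℤ) - (l:ℤ)) * t))) * hcan j
      rw [Finset.sum_congr rfl fun j _ => Finset.sum_congr rfl fun l _ => hpt j l]
      simp only [← Finset.mul_sum]
      rw [Hmain]
      field_simp
      ring
    -- assemble the per-round identity
    calc (∑ j : Fin d, ∑ l : Fin d,
        (r k * ((A₀ ^ k) j l * ((star B₀) ^ k) j l)
        + ((starRingEnd ℂ) (r k) * ω ^ k) * ((A₀ ^ k) j l * ((star B₁) ^ k) j l)
        + (starRingEnd ℂ) (r k) * ((A₁ ^ k) j l * ((star B₀) ^ k) j l)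
        + r k * ((A₁ ^ k) j l * ((star B₁) ^ k) j l)))
        = r k * (∑ j : Fin d, ∑ l : Fin d, (A₀ ^ k) j l * ((star B₀) ^ k) j l)
          + ((starRingEnd ℂ) (r k) * ω ^ k)
            * (∑ j : Fin d, ∑ l : Fin d, (A₀ ^ k) j l * ((star B₁) ^ k) j l)
          + (starRingEnd ℂ) (r k)
            * (∑ j : Fin d, ∑ l : Fin d, (A₁ ^ k) j l * ((star B₀) ^ k) j l)
          + r k * (∑ j : Fin d, ∑ l : Fin d, (A₁ ^ k) j l * ((star B₁) ^ k) j l) := by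
          simp only [Finset.sum_add_distrib, ← Finset.mul_sum]
      _ = 2 * d := by
          rw [T1, T2, T3, T4, hrconj k, hr' k, hω4]
          have hxy : μ ^ k * μ⁻¹ ^ k = 1 := by
            rw [inv_pow, mul_inv_cancel₀ (pow_ne_zero k hμ0)]
          linear_combination ((((1:ℂ)-I)/2*((d:ℂ)+(I-1)*k)) * (μ^k*μ⁻¹^k + 2)
            + (((1:ℂ)+I)/2*((d:ℂ)+(-1-I)*k))
              * ((μ^k*μ⁻¹^k)^3 + (μ^k*μ⁻¹^k)^2 + μ^k*μ⁻¹^k + 2)) * hxy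
            + (-2*(k:ℂ)) * Complex.I_sq
  -- outer assembly
  have hsd0 : ((Real.sqrt d : ℝ) : ℂ) ≠ 0 := by
    intro h
    rw [h, mul_zero] at hsd
    exact hd0 hsd.symm
  have hconjc : (starRingEnd ℂ) ((1:ℂ) / (Real.sqrt d : ℝ)) = (1:ℂ) / (Real.sqrt d : ℝ) := by
    rw [map_div₀, _root_.map_one, Complex.conj_ofReal]
  have hc2 : ∀ z : ℂ, ((1:ℂ)/(Real.sqrt d : ℝ)) * (z * ((1:ℂ)/(Real.sqrt d : ℝ)))
      = 1/(d:ℂ) * z := by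
    intro z
    have h1 : ((1:ℂ)/(Real.sqrt d : ℝ)) * (z * ((1:ℂ)/(Real.sqrt d : ℝ)))
        = z * (1/(((Real.sqrt d : ℝ):ℂ) * ((Real.sqrt d : ℝ):ℂ))) := by ring
    rw [h1, hsd]
    ring
  have hOdentry : ∀ j l : Fin d, Od (j,j) (l,l) = ∑ k ∈ Finset.Icc 1 (d-1),
      (r k * ((A₀ ^ k) j l * ((star B₀) ^ k) j l)
      + ((starRingEnd ℂ) (r k) * ω ^ k) * ((A₀ ^ k) j l * ((star B₁) ^ k) j l)
      + (starRingEnd ℂ) (r k) * ((A₁ ^ k) j l * ((star B₀) ^ k) j l)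
      + r k * ((A₁ ^ k) j l * ((star B₁) ^ k) j l)) := by
    intro j l
    rw [hOd, Matrix.sum_apply]
    refine Finset.sum_congr rfl fun k _ => ?_
    simp [Matrix.add_apply, Matrix.smul_apply, Matrix.kroneckerMap_apply, smul_eq_mul]
  calc ∑ p, (starRingEnd ℂ) (Φ p) * Od.mulVec Φ p
      = ∑ j : Fin d, ∑ l : Fin d,
          ((1:ℂ)/(Real.sqrt d : ℝ)) * (Od (j,j) (l,l) * ((1:ℂ)/(Real.sqrt d : ℝ))) := by
        rw [hΦ]
        simp only [Matrix.mulVec, dotProduct, Fintype.sum_prod_type,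
          apply_ite (starRingEnd ℂ), map_zero, hconjc, ite_mul, mul_ite, zero_mul,
          mul_zero, Finset.sum_ite_eq, Finset.sum_ite_eq', Finset.mem_univ, if_true,
          Finset.mul_sum]
        rw [Finset.sum_congr rfl fun x (_ : x ∈ Finset.univ) => Finset.sum_comm]
        simp only [Finset.sum_ite_eq, Finset.mem_univ, if_true]
    _ = ∑ j : Fin d, ∑ l : Fin d, 1/(d:ℂ) * Od (j,j) (l,l) :=
        Finset.sum_congr rfl fun j _ => Finset.sum_congr rfl fun l _ => hc2 _
    _ = ∑ k ∈ Finset.Icc 1 (d-1), ∑ j : Fin d, ∑ l : Fin d, 1/(d:ℂ) *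
          (r k * ((A₀ ^ k) j l * ((star B₀) ^ k) j l)
          + ((starRingEnd ℂ) (r k) * ω ^ k) * ((A₀ ^ k) j l * ((star B₁) ^ k) j l)
          + (starRingEnd ℂ) (r k) * ((A₁ ^ k) j l * ((star B₀) ^ k) j l)
          + r k * ((A₁ ^ k) j l * ((star B₁) ^ k) j l)) := by
        rw [Finset.sum_congr rfl fun j (_ : j ∈ Finset.univ) => Finset.sum_congr rfl
          fun l (_ : l ∈ Finset.univ) => by rw [hOdentry j l, Finset.mul_sum]]
        rw [Finset.sum_congr rfl fun j (_ : j ∈ Finset.univ) => Finset.sum_comm]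
        exact Finset.sum_comm
    _ = ∑ k ∈ Finset.Icc 1 (d-1), (2 : ℂ) := by
        refine Finset.sum_congr rfl fun k hk => ?_
        obtain ⟨hk1, hk2⟩ := Finset.mem_Icc.mp hk
        have hkey := key k hk1 hk2
        simp only [← Finset.mul_sum]
        rw [hkey]
        field_simp
    _ = 2 * ((d : ℂ) - 1) := by
        rw [Finset.sum_const, Nat.card_Icc]
        have : (d - 1 + 1 - 1 : ℕ) = d - 1 := by omega
        rw [this, nsmul_eq_mul, Nat.cast_sub (by omega : 1 ≤ d), Nat.cast_one]
        ring
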